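/- Let A and B be admissible linear chains with e(A) + e(B) = 1. Then d(A) = d(B) and e(Aᵀ) + e(Bᵀ) = 1. -/

import Mathlib

/-- The tridiagonal matrix associated to a linear chain `A = [a₁,…,a_r]`:
diagonal entries `aᵢ`, entries `-1` immediately above/below the diagonal, `0` elsewhere. -/
def chainMatrix (A : List ℤ) : Matrix (Fin A.length) (Fin A.length) ℤ :=
  fun i j =>
    if i = j then A.get i
    else if (i : ℕ) + 1 = (j : ℕ) ∨ (j : ℕ) + 1 = (i : ℕ) then -1 else 0

/-- The discriminant `d(A)` of a linear chain: the determinant of `chainMatrix A`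
(the `0 × 0` determinant being `1` for the empty list). -/
def disc (A : List ℤ) : ℤ := (chainMatrix A).det

/-- A linear chain is admissible if it is nonempty and all of its entries are `≥ 2`. -/
def Admissible (A : List ℤ) : Prop := A ≠ [] ∧ ∀ a ∈ A, 2 ≤ a

/-- The inductance `e(A) = d(A̅)/d(A)` of a linear chain, as a rational number. -/
def inductance (A : List ℤ) : ℚ := (disc A.tail : ℚ) / (disc A : ℚ)

lemma disc_nil : disc [] = 1 := by
  simp [disc, Matrix.det_fin_zero]

lemma disc_single (a : ℤ) : disc [a] = a := by
  simp [disc, Matrix.det_fin_one, chainMatrix]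

lemma submatrix_succ (x : ℤ) (l : List ℤ) :
    (chainMatrix (x :: l)).submatrix Fin.succ Fin.succ = chainMatrix l := by
  ext i j
  by_cases hij : i = j
  · subst hij; simp [chainMatrix]
  · have hc : (((i.succ:ℕ)) + 1 = (j.succ:ℕ) ∨ ((j.succ:ℕ)) + 1 = (i.succ:ℕ)) ↔
        ((i:ℕ) + 1 = (j:ℕ) ∨ (j:ℕ) + 1 = (i:ℕ)) := by
      simp only [Fin.val_succ]; omega
    simp [chainMatrix, hij, Fin.succ_inj, hc]

lemma disc_cons_cons (a b : ℤ) (l : List ℤ) :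
    disc (a :: b :: l) = a * disc (b :: l) - disc l := by
  let M : Matrix (Fin (l.length + 1 + 1)) (Fin (l.length + 1 + 1)) ℤ :=
    chainMatrix (a :: b :: l)
  have hdet : disc (a :: b :: l) = M.det := rfl
  have h00 : M 0 0 = a := by simp [M, chainMatrix]
  have h01 : M 0 (Fin.succ 0) = -1 := by simp [M, chainMatrix, Fin.ext_iff]
  rw [hdet, Matrix.det_succ_row_zero, Fin.sum_univ_succ, Fin.sum_univ_succ]
  have hzero : ∀ j : Fin l.length, M 0 j.succ.succ = 0 := by
    intro j
    have h1 : ((0 : Fin (l.length+1+1)) : ℕ) = 0 := rfl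
    have h2 : ((j.succ.succ : Fin (l.length+1+1)) : ℕ) = (j:ℕ) + 2 := rfl
    simp only [M, chainMatrix]
    rw [if_neg (by simp [Fin.ext_iff, h1, h2]), if_neg (by simp [h1, h2])]
  have hsa0 : (Fin.succAbove (0 : Fin (l.length+1+1))) = Fin.succ := by
    funext i; exact Fin.zero_succAbove i
  have hS0 : (M.submatrix Fin.succ (Fin.succAbove 0)).det = disc (b :: l) := by
    rw [hsa0]
    have := submatrix_succ a (b :: l)
    rw [show (M.submatrix Fin.succ Fin.succ) = chainMatrix (b :: l) from this]
    rfl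
  set S1 := M.submatrix Fin.succ (Fin.succ (0 : Fin (l.length+1))).succAbove with hS1
  have hS1det : S1.det = - disc l := by
    rw [Matrix.det_succ_column_zero, Fin.sum_univ_succ]
    have hcol0 : (Fin.succ (0 : Fin (l.length+1))).succAbove 0 = 0 := by
      apply Fin.succAbove_of_castSucc_lt
      simp [Fin.lt_def]
    have e00 : S1 0 0 = -1 := by
      simp only [hS1, Matrix.submatrix_apply, hcol0]
      simp [M, chainMatrix, Fin.ext_iff]
    have ezero : ∀ i : Fin (l.length), S1 i.succ 0 = 0 := by
      intro i
      simp only [hS1, Matrix.submatrix_apply, hcol0]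
      have h2 : ((i.succ.succ : Fin (l.length+1+1)) : ℕ) = (i:ℕ) + 2 := rfl
      simp only [M, chainMatrix]
      rw [if_neg (by simp [Fin.ext_iff, h2]), if_neg (by simp [h2])]
    have hsa0' : (Fin.succAbove (0 : Fin (l.length+1))) = Fin.succ := by
      funext i; exact Fin.zero_succAbove i
    have hcomp : (Fin.succ (0 : Fin (l.length+1))).succAbove ∘ Fin.succ
        = Fin.succ ∘ (Fin.succ : Fin l.length → Fin (l.length+1)) := by
      funext j
      simp only [Function.comp_apply]
      apply Fin.succAbove_of_le_castSucc
      simp [Fin.le_def]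
    have hinner : (S1.submatrix (Fin.succAbove 0) Fin.succ) = chainMatrix l := by
      rw [hsa0', hS1, Matrix.submatrix_submatrix, hcomp,
        ← Matrix.submatrix_submatrix, submatrix_succ, submatrix_succ]
    rw [hinner]
    have hrest : ∀ i : Fin l.length,
        (-1:ℤ) ^ ((i.succ : Fin (l.length+1)) : ℕ) * S1 i.succ 0 *
          (S1.submatrix i.succ.succAbove Fin.succ).det = 0 := by
      intro i; rw [ezero]; ring
    simp only [hrest, Finset.sum_const_zero, add_zero, e00]
    rw [show (chainMatrix l).det = disc l from rfl]
    simp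
  rw [hS0, hS1det, h01]
  have hrest : ∀ j : Fin l.length,
      (-1:ℤ) ^ ((j.succ.succ : Fin (l.length+1+1)) : ℕ) * M 0 j.succ.succ *
        (M.submatrix Fin.succ j.succ.succ.succAbove).det = 0 := by
    intro j; rw [hzero]; ring
  simp only [hrest, Finset.sum_const_zero, add_zero, h00]
  simp [Fin.val_succ]
  ring

lemma disc_reverse (A : List ℤ) : disc A.reverse = disc A := by
  let e : Fin A.reverse.length ≃ Fin A.length :=
    (finCongr A.length_reverse).trans (Fin.revPerm)
  have key : chainMatrix A.reverse = (chainMatrix A).submatrix e e := by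
    ext i j
    have hval : ∀ k : Fin A.reverse.length, ((e k : Fin A.length) : ℕ) = A.length - 1 - (k : ℕ) := by
      intro k; simp [e, Fin.rev]
      omega
    have hi : (i : ℕ) < A.length := by simpa using i.2
    have hj : (j : ℕ) < A.length := by simpa using j.2
    by_cases hij : i = j
    · subst hij
      simp only [chainMatrix, if_pos rfl, Matrix.submatrix_apply, if_pos rfl]
      have : A.reverse.get i = A.reverse[(i:ℕ)] := rfl
      rw [this, List.getElem_reverse]
      have : A.get (e i) = A[((e i : Fin A.length) : ℕ)] := rfl
      rw [this]
      simp [hval i]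
    · have hij' : e i ≠ e j := fun h => hij (e.injective h)
      have hc : (((e i : Fin A.length) : ℕ) + 1 = ((e j : Fin A.length):ℕ) ∨
          ((e j : Fin A.length):ℕ) + 1 = ((e i : Fin A.length):ℕ)) ↔
          ((i:ℕ) + 1 = (j:ℕ) ∨ (j:ℕ) + 1 = (i:ℕ)) := by
        rw [hval i, hval j]
        have hne : (i:ℕ) ≠ (j:ℕ) := fun h => hij (Fin.ext h)
        omega
      simp [chainMatrix, hij, hij', hc, Matrix.submatrix_apply]
  rw [disc, key, Matrix.det_submatrix_equiv_self]
  rfl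

lemma disc_growth : ∀ (A : List ℤ), (∀ a ∈ A, 2 ≤ a) →
    1 ≤ disc A ∧ (A ≠ [] → disc A.tail < disc A) := by
  intro A
  induction A with
  | nil => intro _; simp [disc_nil]
  | cons a l ih =>
    intro h
    have ha : 2 ≤ a := h a (by simp)
    have hl := ih (fun x hx => h x (List.mem_cons_of_mem _ hx))
    cases l with
    | nil =>
      refine ⟨by rw [disc_single]; omega, fun _ => ?_⟩
      rw [disc_single]; simp [disc_nil]; omega
    | cons b m =>
      obtain ⟨h1, h2⟩ := hl
      have h2 := h2 (by simp)
      rw [List.tail_cons] at h2 ⊢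
      rw [disc_cons_cons]
      constructor
      · nlinarith
      · intro _; nlinarith

lemma disc_identity : ∀ (B : List ℤ), B ≠ [] → ∀ a : ℤ,
    disc (a :: B.dropLast) * disc B - disc (a :: B) * disc B.dropLast = 1 := by
  intro B
  induction B with
  | nil => intro h; exact absurd rfl h
  | cons b C ih =>
    intro _ a
    cases C with
    | nil =>
      simp only [List.dropLast_singleton, disc_single, disc_nil]
      rw [show (a :: [b]) = [a, b] from rfl, show disc [a,b] = a * disc [b] - disc [] from
        disc_cons_cons a b [], disc_single, disc_nil]
      ring
    | cons c D =>
      have hC : (c :: D) ≠ [] := by simp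
      rw [List.dropLast_cons₂]
      rw [disc_cons_cons a b (c :: D).dropLast, disc_cons_cons a b (c :: D)]
      linear_combination ih hC b

lemma disc_coprime_tail (A : List ℤ) (hA : A ≠ []) :
    IsCoprime (disc A) (disc A.tail) := by
  cases A with
  | nil => exact absurd rfl hA
  | cons a B =>
    cases B with
    | nil =>
      rw [List.tail_cons, disc_nil]
      exact isCoprime_one_right
    | cons b C =>
      have h := disc_identity (b :: C) (by simp) a
      exact ⟨-disc (b :: C).dropLast, disc (a :: (b :: C).dropLast),
        by rw [List.tail_cons]; linear_combination h⟩

lemma disc_dvd_dropLast_mul_tail (A : List ℤ) (hA : A ≠ []) :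
    disc A ∣ disc A.dropLast * disc A.tail - 1 := by
  cases A with
  | nil => exact absurd rfl hA
  | cons a B =>
    cases B with
    | nil => simp [disc_nil]
    | cons b C =>
      have h := disc_identity (b :: C) (by simp) a
      rw [List.tail_cons, List.dropLast_cons₂]
      exact ⟨disc (b :: C).dropLast, by linear_combination h⟩

/-- Lemma 2.2 (i): if `A`, `B` are admissible linear chains with `e(A) + e(B) = 1`,
then `d(A) = d(B)` and `e(Aᵀ) + e(Bᵀ) = 1`. -/
theorem inductance_add_eq_one (A B : List ℤ) (hA : Admissible A) (hB : Admissible B)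
    (h : inductance A + inductance B = 1) :
    disc A = disc B ∧ inductance A.reverse + inductance B.reverse = 1 := by
  obtain ⟨hAne, hA2⟩ := hA
  obtain ⟨hBne, hB2⟩ := hB
  have hAg := disc_growth A hA2
  have hBg := disc_growth B hB2
  have hAtail2 : ∀ a ∈ A.tail, 2 ≤ a := fun x hx => hA2 x (List.mem_of_mem_tail hx)
  have hBtail2 : ∀ a ∈ B.tail, 2 ≤ a := fun x hx => hB2 x (List.mem_of_mem_tail hx)
  have ha'1 : 1 ≤ disc A.tail := (disc_growth A.tail hAtail2).1
  have hb'1 : 1 ≤ disc B.tail := (disc_growth B.tail hBtail2).1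
  have ha'lt : disc A.tail < disc A := hAg.2 hAne
  have hb'lt : disc B.tail < disc B := hBg.2 hBne
  have ha1 : 1 ≤ disc A := hAg.1
  have hb1 : 1 ≤ disc B := hBg.1
  have haQ : (disc A : ℚ) ≠ 0 := by exact_mod_cast (by omega : disc A ≠ 0)
  have hbQ : (disc B : ℚ) ≠ 0 := by exact_mod_cast (by omega : disc B ≠ 0)
  -- clear denominators
  have key : disc A.tail * disc B + disc A * disc B.tail = disc A * disc B := by
    rw [inductance, inductance, div_add_div _ _ haQ hbQ, div_eq_one_iff_eq (by
      exact mul_ne_zero haQ hbQ)] at h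
    exact_mod_cast h
  -- d(A) = d(B)
  have hcA := disc_coprime_tail A hAne
  have hcB := disc_coprime_tail B hBne
  have hdvd1 : disc A ∣ disc B := by
    have : disc A ∣ disc B * disc A.tail := ⟨disc B - disc B.tail, by linear_combination key⟩
    exact hcA.dvd_of_dvd_mul_right this
  have hdvd2 : disc B ∣ disc A := by
    have : disc B ∣ disc A * disc B.tail := ⟨disc A - disc A.tail, by linear_combination key⟩
    exact hcB.dvd_of_dvd_mul_right this
  have hab : disc A = disc B := Int.dvd_antisymm (by omega) (by omega) hdvd1 hdvd2
  refine ⟨hab, ?_⟩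
  -- sum of tails
  have hsum : disc A.tail + disc B.tail = disc A := by
    have h0 : (disc A.tail + disc B.tail) * disc A = disc A * disc A := by
      rw [hab] at key ⊢
      linear_combination key
    exact mul_right_cancel₀ (by omega) h0
  -- second part
  have d1 := disc_dvd_dropLast_mul_tail A hAne
  have d2 := disc_dvd_dropLast_mul_tail B hBne
  rw [← hab] at d2
  have hdd : disc A ∣ (disc A.dropLast + disc B.dropLast) * disc A.tail := by
    obtain ⟨u, hu⟩ := d1
    obtain ⟨v, hv⟩ := d2
    exact ⟨u - v + disc B.dropLast, by linear_combination hu - hv + disc B.dropLast * hsum⟩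
  have hddl : disc A ∣ disc A.dropLast + disc B.dropLast := hcA.dvd_of_dvd_mul_right hdd
  -- bounds on dropLast discs
  have hrevA2 : ∀ a ∈ A.reverse, 2 ≤ a := fun x hx => hA2 x (List.mem_reverse.mp hx)
  have hrevB2 : ∀ a ∈ B.reverse, 2 ≤ a := fun x hx => hB2 x (List.mem_reverse.mp hx)
  have hrevAne : A.reverse ≠ [] := by simpa using hAne
  have hrevBne : B.reverse ≠ [] := by simpa using hBne
  have hdlA : disc A.reverse.tail = disc A.dropLast := by
    rw [List.tail_reverse, disc_reverse]
  have hdlB : disc B.reverse.tail = disc B.dropLast := by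
    rw [List.tail_reverse, disc_reverse]
  have ha''lt : disc A.dropLast < disc A := by
    have := (disc_growth A.reverse hrevA2).2 hrevAne
    rwa [hdlA, disc_reverse] at this
  have hb''lt : disc B.dropLast < disc A := by
    have := (disc_growth B.reverse hrevB2).2 hrevBne
    rw [hdlB, disc_reverse, ← hab] at this
    exact this
  have ha''1 : 1 ≤ disc A.dropLast :=
    (disc_growth A.dropLast (fun x hx => hA2 x ((List.dropLast_sublist A).subset hx))).1
  have hb''1 : 1 ≤ disc B.dropLast :=
    (disc_growth B.dropLast (fun x hx => hB2 x ((List.dropLast_sublist B).subset hx))).1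
  have hsum2 : disc A.dropLast + disc B.dropLast = disc A := by
    obtain ⟨k, hk⟩ := hddl
    have hk1 : k = 1 := by nlinarith
    rw [hk, hk1, mul_one]
  -- conclude
  rw [inductance, inductance, hdlA, hdlB, disc_reverse, disc_reverse, ← hab]
  rw [← add_div]
  rw [show ((disc A.dropLast : ℚ) + (disc B.dropLast : ℚ)) = ((disc A : ℤ) : ℚ) by
    exact_mod_cast congrArg (fun n : ℤ => (n : ℚ)) hsum2]
  exact div_self haQ
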